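/- Every poset Q with finite downsets has an initial scaffold; i.e., there exists a subposet P ⊆ Q whose elements are exactly the q ∈ Q with disconnected strict downset, and which for each such q and each connected component A of its strict downset contains exactly one relation m < q with m a minimum of Q contained in A. -/

import Mathlib

/-- A single comparability step within `S` with respect to the relation `r`. -/
def StepIn {α : Type*} (S : Set α) (r : α → α → Prop) (x y : α) : Prop :=
  x ∈ S ∧ y ∈ S ∧ (r x y ∨ r y x)

/-- Connectivity of the set `S` equipped with the relation `r`: `S` is nonempty and any
two elements of `S` are joined by a finite zigzag of `r`-steps within `S`. -/
def ConnIn {α : Type*} (S : Set α) (r : α → α → Prop) : Prop :=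
  S.Nonempty ∧ ∀ a ∈ S, ∀ b ∈ S, Relation.ReflTransGen (StepIn S r) a b

/-- Connectivity of a subset of a poset, as a subposet (zigzags of comparabilities). -/
def PosetConn {α : Type*} [LE α] (S : Set α) : Prop := ConnIn S (· ≤ ·)

/-- `a` and `b` lie in `S` in the same connected component of the subposet `S`. -/
def SameComp {α : Type*} [LE α] (S : Set α) (a b : α) : Prop :=
  a ∈ S ∧ b ∈ S ∧ Relation.ReflTransGen (StepIn S (· ≤ ·)) a b

/-- An initial scaffold of the poset `α`: a subposet whose elements are exactly the
elements with disconnected (possibly empty) strict downset, and whose non-identity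
relations `r` consist, for each such element `b` and each connected component of the
strict downset of `b`, of exactly one relation `m < b` with `m` a minimum of `α` in
that component. -/
def IsScaffold {α : Type*} [PartialOrder α] (P : Set α) (r : α → α → Prop) : Prop :=
  P = {q | ¬ PosetConn (Set.Iio q)} ∧
  (∀ a b, r a b → IsMin a ∧ a < b ∧ b ∈ P) ∧
  (∀ b ∈ P, ∀ x ∈ Set.Iio b, ∃! m, r m b ∧ SameComp (Set.Iio b) m x)

section Aux
open Classical

variable {Q : Type} [PartialOrder Q]

lemma stepIn_symm (S : Set Q) : Symmetric (StepIn S ((· ≤ ·) : Q → Q → Prop)) := by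
  rintro x y ⟨hx, hy, h⟩
  exact ⟨hy, hx, h.symm⟩

lemma sameComp_symm {S : Set Q} {a b : Q} (h : SameComp S a b) : SameComp S b a :=
  ⟨h.2.1, h.1, (@Relation.ReflTransGen.stdSymm _ _ ⟨stepIn_symm S⟩).symm _ _ h.2.2⟩

lemma sameComp_trans {S : Set Q} {a b c : Q} (h : SameComp S a b) (h' : SameComp S b c) :
    SameComp S a c :=
  ⟨h.1, h'.2.1, h.2.2.trans h'.2.2⟩

/-- The connected component of `x` in the strict downset of `b`. -/
def comp (b x : Q) : Set Q := {y | SameComp (Set.Iio b) x y}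

lemma comp_eq {b x y : Q} (h : SameComp (Set.Iio b) x y) : comp b x = comp b y := by
  ext z
  constructor
  · intro hz
    exact sameComp_trans (sameComp_symm h) hz
  · intro hz
    exact sameComp_trans h hz

/-- Pick a distinguished minimum in the component of `x` below `b` (default `x`). -/
noncomputable def pick (b x : Q) : Q :=
  if h : ∃ m, IsMin m ∧ m ∈ comp b x then h.choose else x

lemma choose_congr {p q : Q → Prop} (h : p = q) (hp : ∃ m, p m) (hq : ∃ m, q m) :
    hp.choose = hq.choose := by
  subst h; rfl

lemma pick_congr {b x y : Q} (h : comp b x = comp b y)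
    (hx : ∃ m, IsMin m ∧ m ∈ comp b x) : pick b x = pick b y := by
  have hy : ∃ m, IsMin m ∧ m ∈ comp b y := h ▸ hx
  rw [pick, pick, dif_pos hx, dif_pos hy]
  exact choose_congr (by rw [h]) hx hy

lemma exists_min_le (hfin : ∀ q : Q, (Set.Iic q).Finite) (x : Q) :
    ∃ m, IsMin m ∧ m ≤ x := by
  obtain ⟨m, hm, hmin⟩ := (hfin x).exists_minimalFor id _ ⟨x, le_refl x⟩
  refine ⟨m, ?_, hm⟩
  intro y hy
  have : m = y := le_antisymm (hmin (le_trans hy hm) hy) hy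
  exact this.le

lemma exists_min_in_comp (hfin : ∀ q : Q, (Set.Iic q).Finite) {b x : Q}
    (hx : x ∈ Set.Iio b) : ∃ m, IsMin m ∧ m ∈ comp b x := by
  obtain ⟨m, hm, hmx⟩ := exists_min_le hfin x
  have hmb : m ∈ Set.Iio b := lt_of_le_of_lt hmx hx
  exact ⟨m, hm, hx, hmb, Relation.ReflTransGen.single ⟨hx, hmb, Or.inr hmx⟩⟩

lemma pick_spec {b x : Q} (h : ∃ m, IsMin m ∧ m ∈ comp b x) :
    IsMin (pick b x) ∧ pick b x ∈ comp b x := by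
  rw [pick, dif_pos h]
  exact h.choose_spec

end Aux

/-- Every poset with finite downsets has an initial scaffold. -/
theorem stmt6 {Q : Type} [PartialOrder Q] (hfin : ∀ q : Q, (Set.Iic q).Finite) :
    ∃ (P : Set Q) (r : Q → Q → Prop), IsScaffold P r := by
  classical
  refine ⟨{q | ¬ PosetConn (Set.Iio q)},
    fun m b => ¬ PosetConn (Set.Iio b) ∧
      ∃ x, x ∈ Set.Iio b ∧ SameComp (Set.Iio b) m x ∧ m = pick b x,
    rfl, ?_, ?_⟩
  · rintro a b ⟨hb, x, hx, hsc, hpa⟩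
    have hex : ∃ m, IsMin m ∧ m ∈ comp b x := exists_min_in_comp hfin hx
    obtain ⟨hmin, hcomp⟩ := pick_spec hex
    rw [← hpa] at hmin hcomp
    exact ⟨hmin, hcomp.2.1, hb⟩
  · rintro b hb x hx
    have hex : ∃ m, IsMin m ∧ m ∈ comp b x := exists_min_in_comp hfin hx
    obtain ⟨hmin, hcomp⟩ := pick_spec hex
    -- hcomp : SameComp (Set.Iio b) x (pick b x)
    refine ⟨pick b x, ⟨⟨hb, x, hx, sameComp_symm hcomp, rfl⟩, sameComp_symm hcomp⟩, ?_⟩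
    rintro m ⟨⟨_, y, hy, hscmy, hpm⟩, hscmx⟩
    have hyx : SameComp (Set.Iio b) y x := sameComp_trans (sameComp_symm hscmy) hscmx
    have : pick b y = pick b x :=
      pick_congr (comp_eq hyx) ((comp_eq hyx).symm ▸ hex)
    rw [hpm, this]
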